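/- For P, Q ∈ Γ_n with 0 < r ≤ p_i/q_i ≤ R for all i, the relative J-divergence D(P||Q) = ∑(p_i - q_i)ln((p_i+q_i)/(2q_i)) satisfies ((r+1)(r+3)/8)·Δ(P||Q) ≤ D(P||Q) ≤ ((R+1)(R+3)/8)·Δ(P||Q), where Δ(P||Q) = ∑(p_i - q_i)²/(p_i + q_i) is the triangular discrimination. -/

import Mathlib

open Finset Real

lemma log_ge_aux (t : ℝ) (ht : 0 < t) : (t - 1) / t ≤ Real.log t := by
  have h := Real.log_le_sub_one_of_pos (x := 1/t) (by positivity)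
  rw [Real.log_div one_ne_zero (ne_of_gt ht), Real.log_one] at h
  have : 1/t - 1 = -((t-1)/t) := by field_simp; ring
  linarith [h, this ▸ h]

lemma aux_low (s t : ℝ) (hs0 : 0 < s) (hs1 : s ≤ 1) (hst : s ≤ t) :
    s * (s + 1) / 2 * ((t - 1) ^ 2 / t) ≤ (t - 1) * Real.log t := by
  have ht : 0 < t := lt_of_lt_of_le hs0 hst
  have hc1 : s * (s + 1) / 2 ≤ 1 := by nlinarith
  have hcs : s * (s + 1) / 2 ≤ s := by nlinarith
  rcases le_total 1 t with h1 | h1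
  · have hlog : (t - 1) / t ≤ Real.log t := log_ge_aux t ht
    have h2 : (t - 1) * ((t - 1) / t) ≤ (t - 1) * Real.log t :=
      mul_le_mul_of_nonneg_left hlog (by linarith)
    have h3 : (t - 1) * ((t - 1) / t) = (t - 1) ^ 2 / t := by ring
    have h4 : s * (s + 1) / 2 * ((t - 1) ^ 2 / t) ≤ 1 * ((t - 1) ^ 2 / t) :=
      mul_le_mul_of_nonneg_right hc1 (by positivity)
    linarith
  · have hlog : Real.log t ≤ t - 1 := Real.log_le_sub_one_of_pos ht
    have h2 : (t - 1) * (t - 1) ≤ (t - 1) * Real.log t := by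
      have := mul_le_mul_of_nonpos_left hlog (by linarith : t - 1 ≤ 0)
      linarith
    have h4 : s * (s + 1) / 2 * ((t - 1) ^ 2 / t) ≤ (t - 1) * (t - 1) := by
      have hA : 0 ≤ (t - 1) ^ 2 / t := by positivity
      have h5 : (t - 1) ^ 2 / t * t = (t - 1) ^ 2 := div_mul_cancel₀ _ (ne_of_gt ht)
      have hct : s * (s + 1) / 2 ≤ t := le_trans hcs hst
      nlinarith [mul_le_mul_of_nonneg_right hct hA]
    linarith

lemma aux_up (S t : ℝ) (hS1 : 1 ≤ S) (ht : 0 < t) (htS : t ≤ S) :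
    (t - 1) * Real.log t ≤ S * (S + 1) / 2 * ((t - 1) ^ 2 / t) := by
  have hC1 : 1 ≤ S * (S + 1) / 2 := by nlinarith
  have hCS : S ≤ S * (S + 1) / 2 := by nlinarith
  rcases le_total 1 t with h1 | h1
  · have hlog : Real.log t ≤ t - 1 := Real.log_le_sub_one_of_pos ht
    have h2 : (t - 1) * Real.log t ≤ (t - 1) * (t - 1) :=
      mul_le_mul_of_nonneg_left hlog (by linarith)
    have h4 : (t - 1) * (t - 1) ≤ S * (S + 1) / 2 * ((t - 1) ^ 2 / t) := by
      have hA : 0 ≤ (t - 1) ^ 2 / t := by positivity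
      have h5 : (t - 1) ^ 2 / t * t = (t - 1) ^ 2 := div_mul_cancel₀ _ (ne_of_gt ht)
      have htC : t ≤ S * (S + 1) / 2 := le_trans htS hCS
      nlinarith [mul_le_mul_of_nonneg_right htC hA]
    linarith
  · have hlog : (t - 1) / t ≤ Real.log t := log_ge_aux t ht
    have h2 : (t - 1) * Real.log t ≤ (t - 1) * ((t - 1) / t) := by
      have := mul_le_mul_of_nonpos_left hlog (by linarith : t - 1 ≤ 0)
      linarith
    have h3 : (t - 1) * ((t - 1) / t) = (t - 1) ^ 2 / t := by ring
    have h4 : 1 * ((t - 1) ^ 2 / t) ≤ S * (S + 1) / 2 * ((t - 1) ^ 2 / t) :=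
      mul_le_mul_of_nonneg_right hC1 (by positivity)
    linarith

theorem stmt7 (n : ℕ) (p q : Fin n → ℝ)
    (hp : ∀ i, 0 < p i) (hq : ∀ i, 0 < q i)
    (hp1 : ∑ i, p i = 1) (hq1 : ∑ i, q i = 1)
    (r R : ℝ) (hr : 0 < r) (hrR : ∀ i, r ≤ p i / q i ∧ p i / q i ≤ R) :
    ((r+1)*(r+3)/8) * (∑ i, (p i - q i)^2 / (p i + q i)) ≤ (∑ i, (p i - q i) * Real.log ((p i + q i) / (2 * q i))) ∧ (∑ i, (p i - q i) * Real.log ((p i + q i) / (2 * q i))) ≤ ((R+1)*(R+3)/8) * (∑ i, (p i - q i)^2 / (p i + q i)) := by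
  have hrq : ∀ i, r * q i ≤ p i := fun i => (le_div_iff₀ (hq i)).mp (hrR i).1
  have hRq : ∀ i, p i ≤ R * q i := fun i => (div_le_iff₀ (hq i)).mp (hrR i).2
  have hr1 : r ≤ 1 := by
    calc r = r * ∑ i, q i := by rw [hq1]; ring
    _ = ∑ i, r * q i := by rw [Finset.mul_sum]
    _ ≤ ∑ i, p i := Finset.sum_le_sum fun i _ => hrq i
    _ = 1 := hp1
  have hR1 : 1 ≤ R := by
    calc (1:ℝ) = ∑ i, p i := hp1.symm
    _ ≤ ∑ i, R * q i := Finset.sum_le_sum fun i _ => hRq i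
    _ = R * ∑ i, q i := by rw [Finset.mul_sum]
    _ = R := by rw [hq1]; ring
  have key : ∀ i,
      ((r+1)*(r+3)/8) * ((p i - q i)^2 / (p i + q i))
        ≤ (p i - q i) * Real.log ((p i + q i) / (2 * q i)) ∧
      (p i - q i) * Real.log ((p i + q i) / (2 * q i))
        ≤ ((R+1)*(R+3)/8) * ((p i - q i)^2 / (p i + q i)) := by
    intro i
    have hpi := hp i
    have hqi := hq i
    set t : ℝ := (p i + q i) / (2 * q i) with ht_def
    have ht0 : 0 < t := by positivity
    have hst : (r + 1) / 2 ≤ t := by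
      rw [ht_def, div_le_div_iff₀ (by norm_num) (by positivity)]
      nlinarith [hrq i]
    have htS : t ≤ (R + 1) / 2 := by
      rw [ht_def, div_le_div_iff₀ (by positivity) (by norm_num)]
      nlinarith [hRq i]
    have hs0 : 0 < (r + 1) / 2 := by linarith
    have hs1 : (r + 1) / 2 ≤ 1 := by linarith
    have hS1 : 1 ≤ (R + 1) / 2 := by linarith
    have e1 : (p i - q i) * Real.log t = (2 * q i) * ((t - 1) * Real.log t) := by
      have h : (2 * q i) * (t - 1) = p i - q i := by
        rw [ht_def]; field_simp; ring
      rw [← h]; ring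
    have e2 : (p i - q i)^2 / (p i + q i) = (2 * q i) * ((t - 1)^2 / t) := by
      rw [ht_def]
      field_simp
      ring
    have ecl : (r+1)*(r+3)/8 = ((r+1)/2) * ((r+1)/2 + 1) / 2 := by ring
    have ecu : (R+1)*(R+3)/8 = ((R+1)/2) * ((R+1)/2 + 1) / 2 := by ring
    have h2q : (0:ℝ) ≤ 2 * q i := by linarith
    constructor
    · rw [e1, e2, ecl]
      calc (r+1)/2 * ((r+1)/2 + 1) / 2 * (2 * q i * ((t - 1)^2 / t))
          = 2 * q i * ((r+1)/2 * ((r+1)/2 + 1) / 2 * ((t - 1)^2 / t)) := by ring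
        _ ≤ 2 * q i * ((t - 1) * Real.log t) :=
            mul_le_mul_of_nonneg_left (aux_low ((r+1)/2) t hs0 hs1 hst) h2q
    · rw [e1, e2, ecu]
      calc 2 * q i * ((t - 1) * Real.log t)
          ≤ 2 * q i * ((R+1)/2 * ((R+1)/2 + 1) / 2 * ((t - 1)^2 / t)) :=
            mul_le_mul_of_nonneg_left (aux_up ((R+1)/2) t hS1 ht0 htS) h2q
        _ = (R+1)/2 * ((R+1)/2 + 1) / 2 * (2 * q i * ((t - 1)^2 / t)) := by ring
  constructor
  · rw [Finset.mul_sum]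
    exact Finset.sum_le_sum fun i _ => (key i).1
  · rw [Finset.mul_sum]
    exact Finset.sum_le_sum fun i _ => (key i).2
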